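/- Let F : ℝ² ∖ {(0,0)} → ℝ be defined by F(x¹,x²) = −(1/8)((x¹)² + (x²)²)·log((x¹)² + (x²)²). Then F satisfies the associativity equations with the identity metric η_{αβ} = δ_{αβ}: for all (x¹,x²) ≠ (0,0) and all α,β,γ,δ ∈ {1,2}, ∑_{λ=1}^2 (∂³F/∂x^α∂x^β∂x^λ)(∂³F/∂x^γ∂x^δ∂x^λ) = ∑_{λ=1}^2 (∂³F/∂x^γ∂x^β∂x^λ)(∂³F/∂x^α∂x^δ∂x^λ). -/

import Mathlib

open scoped BigOperators

noncomputable section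

/-- The prepotential `F(x¹,x²) = −(1/8)((x¹)² + (x²)²) log((x¹)² + (x²)²)`. -/
def F9 (x : Fin 2 → ℝ) : ℝ :=
  -(1 / 8) * ((x 0) ^ 2 + (x 1) ^ 2) * Real.log ((x 0) ^ 2 + (x 1) ^ 2)

/-- The standard basis vector `e_i` of `ℝ²`. -/
def e2 (i : Fin 2) : Fin 2 → ℝ := Pi.single i 1

/-- Third partial derivative `∂³F/∂x^a∂x^b∂x^g` at `x`. -/
def d3 (F : (Fin 2 → ℝ) → ℝ) (x : Fin 2 → ℝ) (a b g : Fin 2) : ℝ :=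
  iteratedFDeriv ℝ 3 F x ![e2 a, e2 b, e2 g]

/- auxiliary -/
def sq2 (x : Fin 2 → ℝ) : ℝ := x 0 ^ 2 + x 1 ^ 2

def pr (i : Fin 2) : (Fin 2 → ℝ) →L[ℝ] ℝ := ContinuousLinearMap.proj i

def sD (x : Fin 2 → ℝ) : (Fin 2 → ℝ) →L[ℝ] ℝ := (2 * x 0) • pr 0 + (2 * x 1) • pr 1

def dlt (i j : Fin 2) : ℝ := if i = j then 1 else 0

lemma sq2_pos {x : Fin 2 → ℝ} (hx : x ≠ 0) : 0 < sq2 x := by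
  have h : x 0 ≠ 0 ∨ x 1 ≠ 0 := by
    by_contra h
    push_neg at h
    exact hx (funext fun i => by fin_cases i <;> simp [h.1, h.2])
  rcases h with h | h <;> [skip; skip] <;> unfold sq2 <;> positivity

lemma hasF_sq2 (x : Fin 2 → ℝ) : HasFDerivAt sq2 (sD x) x := by
  have h := (((pr 0).hasFDerivAt (x := x)).mul ((pr 0).hasFDerivAt (x := x))).add
    (((pr 1).hasFDerivAt (x := x)).mul ((pr 1).hasFDerivAt (x := x)))
  have heq : sq2 = fun y : Fin 2 → ℝ => y 0 * y 0 + y 1 * y 1 := by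
    funext y; simp [sq2, pow_two]
  rw [heq]
  have hd : sD x = (pr 0) x • pr 0 + (pr 0) x • pr 0 + ((pr 1) x • pr 1 + (pr 1) x • pr 1) := by
    simp only [pr, ContinuousLinearMap.proj_apply]
    unfold sD pr
    module
  rw [hd]
  exact h

lemma e2_apply (i j : Fin 2) : e2 i j = if j = i then 1 else 0 := Pi.single_apply i 1 j

lemma sD_apply (x : Fin 2 → ℝ) (a : Fin 2) : sD x (e2 a) = 2 * x a := by
  simp only [sD, ContinuousLinearMap.add_apply, ContinuousLinearMap.smul_apply, pr,
    ContinuousLinearMap.proj_apply, e2_apply, smul_eq_mul]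
  fin_cases a <;> simp

lemma pr_apply' (g b : Fin 2) : pr g (e2 b) = dlt g b := by
  simp [pr, e2_apply, dlt]

/-- first derivative of F9 -/
lemma hasF_F9 {x : Fin 2 → ℝ} (hx : x ≠ 0) :
    HasFDerivAt F9 ((-(1 / 8) * (Real.log (sq2 x) + 1)) • sD x) x := by
  have hne : sq2 x ≠ 0 := (sq2_pos hx).ne'
  have hg : HasDerivAt (fun t : ℝ => -(1 / 8) * t * Real.log t)
      (-(1 / 8) * (Real.log (sq2 x) + 1)) (sq2 x) := by
    have h1 : HasDerivAt (fun t : ℝ => -(1 / 8) * t) (-(1 / 8)) (sq2 x) := by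
      simpa using (hasDerivAt_id (sq2 x)).const_mul (-(1 / 8) : ℝ)
    have h2 := h1.mul (Real.hasDerivAt_log hne)
    refine h2.congr_deriv ?_
    have hinv1 : sq2 x * (sq2 x)⁻¹ = 1 := mul_inv_cancel₀ hne
    linear_combination (-(1 / 8) : ℝ) * hinv1
  have := hg.comp_hasFDerivAt x (hasF_sq2 x)
  exact this

lemma fderiv_F9 {x : Fin 2 → ℝ} (hx : x ≠ 0) :
    fderiv ℝ F9 x = (-(1 / 8) * (Real.log (sq2 x) + 1)) • sD x := (hasF_F9 hx).fderiv

/-- directional derivative of F9 -/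
def P1 (g : Fin 2) (x : Fin 2 → ℝ) : ℝ := -(1 / 8) * (Real.log (sq2 x) + 1) * (2 * x g)

lemma fderiv_F9_apply {x : Fin 2 → ℝ} (hx : x ≠ 0) (g : Fin 2) :
    fderiv ℝ F9 x (e2 g) = P1 g x := by
  rw [fderiv_F9 hx]
  simp only [ContinuousLinearMap.smul_apply, sD_apply, smul_eq_mul, P1]
  try ring

def C1 (g : Fin 2) (x : Fin 2 → ℝ) : (Fin 2 → ℝ) →L[ℝ] ℝ :=
  (-(1 / 8) * (Real.log (sq2 x) + 1)) • ((2 : ℝ) • pr g) +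
    (2 * x g) • ((-(1 / 8) : ℝ) • ((sq2 x)⁻¹ • sD x))

lemma hasF_P1 {x : Fin 2 → ℝ} (hx : x ≠ 0) (g : Fin 2) :
    HasFDerivAt (P1 g) (C1 g x) x := by
  have hne : sq2 x ≠ 0 := (sq2_pos hx).ne'
  have hu : HasFDerivAt (fun y => Real.log (sq2 y) + 1) ((sq2 x)⁻¹ • sD x) x :=
    ((Real.hasDerivAt_log hne).comp_hasFDerivAt x (hasF_sq2 x)).add_const 1
  have hv : HasFDerivAt (fun y : Fin 2 → ℝ => 2 * y g) ((2 : ℝ) • pr g) x :=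
    ((pr g).hasFDerivAt (x := x)).const_mul 2
  exact (hu.const_mul (-(1 / 8))).mul hv

def P2 (g b : Fin 2) (x : Fin 2 → ℝ) : ℝ :=
  -(1 / 8) * (Real.log (sq2 x) + 1) * (2 * dlt g b) +
    (2 * x g) * (-(1 / 8) * ((sq2 x)⁻¹ * (2 * x b)))

lemma C1_apply (g b : Fin 2) (x : Fin 2 → ℝ) : C1 g x (e2 b) = P2 g b x := by
  simp only [C1, P2, ContinuousLinearMap.add_apply, ContinuousLinearMap.smul_apply,
    pr_apply', sD_apply, smul_eq_mul]
  try ring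

def C2 (g b : Fin 2) (x : Fin 2 → ℝ) : (Fin 2 → ℝ) →L[ℝ] ℝ :=
  (2 * dlt g b) • ((-(1 / 8) * (1 : ℝ)) • ((sq2 x)⁻¹ • sD x)) +
    ((2 * x g) • ((-(1 / 8) : ℝ) • ((sq2 x)⁻¹ • ((2 : ℝ) • pr b) +
        (2 * x b) • ((-(sq2 x ^ 2)⁻¹) • sD x))) +
      (-(1 / 8) * ((sq2 x)⁻¹ * (2 * x b))) • ((2 : ℝ) • pr g))

lemma hasF_P2 {x : Fin 2 → ℝ} (hx : x ≠ 0) (g b : Fin 2) :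
    HasFDerivAt (P2 g b) (C2 g b x) x := by
  have hne : sq2 x ≠ 0 := (sq2_pos hx).ne'
  have hu : HasFDerivAt (fun y => Real.log (sq2 y) + 1) ((sq2 x)⁻¹ • sD x) x :=
    ((Real.hasDerivAt_log hne).comp_hasFDerivAt x (hasF_sq2 x)).add_const 1
  have hv : ∀ i : Fin 2, HasFDerivAt (fun y : Fin 2 → ℝ => 2 * y i) ((2 : ℝ) • pr i) x :=
    fun i => ((pr i).hasFDerivAt (x := x)).const_mul 2
  have hinv : HasFDerivAt (fun y => (sq2 y)⁻¹) ((-(sq2 x ^ 2)⁻¹) • sD x) x :=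
    (hasDerivAt_inv hne).comp_hasFDerivAt x (hasF_sq2 x)
  have hT1 := ((hu.const_mul (-(1 / 8))).mul_const (2 * dlt g b))
  have hT2 := (hv g).mul ((hinv.mul (hv b)).const_mul (-(1 / 8)))
  have h := hT1.add hT2
  refine h.congr_fderiv ?_
  unfold C2
  simp only [Pi.mul_apply]
  module

lemma contDiff_sq2 : ContDiff ℝ 3 sq2 := by
  have h0 : ContDiff ℝ 3 fun y : Fin 2 → ℝ => y 0 := (pr 0).contDiff
  have h1 : ContDiff ℝ 3 fun y : Fin 2 → ℝ => y 1 := (pr 1).contDiff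
  exact (h0.pow 2).add (h1.pow 2)

lemma contDiffAt_F9 {x : Fin 2 → ℝ} (hx : x ≠ 0) : ContDiffAt ℝ 3 F9 x := by
  have hne : sq2 x ≠ 0 := (sq2_pos hx).ne'
  have hlog : ContDiffAt ℝ 3 Real.log (sq2 x) := Real.contDiffAt_log.mpr hne
  have h1 : ContDiffAt ℝ 3 (fun y => Real.log (sq2 y)) x :=
    hlog.comp x contDiff_sq2.contDiffAt
  exact ((contDiffAt_const (c := -(1/8 : ℝ))).mul contDiff_sq2.contDiffAt).mul h1

lemma key {x : Fin 2 → ℝ} (hx : x ≠ 0) (a b g : Fin 2) :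
    d3 F9 x a b g = C2 g b x (e2 a) := by
  have hU : ∀ᶠ y in nhds x, y ≠ 0 :=
    (isOpen_compl_singleton : IsOpen ({(0 : Fin 2 → ℝ)}ᶜ)).eventually_mem hx
  -- step 1 : d3 as triple fderiv
  have h1 : d3 F9 x a b g
      = fderiv ℝ (fderiv ℝ (fderiv ℝ F9)) x (e2 a) (e2 b) (e2 g) := by
    have e3 : d3 F9 x a b g
        = iteratedFDeriv ℝ (2 + 1) F9 x ![e2 a, e2 b, e2 g] := rfl
    rw [e3, iteratedFDeriv_succ_apply_right, iteratedFDeriv_succ_apply_right,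
      iteratedFDeriv_one_apply]
    congr 1
  -- differentiability facts
  have hA1cd : ∀ y : Fin 2 → ℝ, y ≠ 0 → ContDiffAt ℝ 2 (fderiv ℝ F9) y := fun y hy =>
    (contDiffAt_F9 hy).fderiv_right (by norm_num)
  have hA2diff : DifferentiableAt ℝ (fderiv ℝ (fderiv ℝ F9)) x :=
    ((hA1cd x hx).fderiv_right (m := 1) (by norm_num)).differentiableAt one_ne_zero
  -- step 2 : pull out the two evaluations
  set ev : ((Fin 2 → ℝ) →L[ℝ] ((Fin 2 → ℝ) →L[ℝ] ℝ)) →L[ℝ] ℝ :=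
    (ContinuousLinearMap.apply ℝ ℝ (e2 g)).comp
      (ContinuousLinearMap.apply ℝ ((Fin 2 → ℝ) →L[ℝ] ℝ) (e2 b)) with hev
  have h2 : fderiv ℝ (fderiv ℝ (fderiv ℝ F9)) x (e2 a) (e2 b) (e2 g)
      = fderiv ℝ (fun y => fderiv ℝ (fderiv ℝ F9) y (e2 b) (e2 g)) x (e2 a) := by
    have hc := ((ContinuousLinearMap.apply ℝ ℝ (e2 g)).hasFDerivAt.comp x
      ((ContinuousLinearMap.apply ℝ ((Fin 2 → ℝ) →L[ℝ] ℝ) (e2 b)).hasFDerivAt.comp x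
        (f := fderiv ℝ (fderiv ℝ F9)) hA2diff.hasFDerivAt)).fderiv
    have : (⇑(ContinuousLinearMap.apply ℝ ℝ (e2 g)) ∘
        (⇑(ContinuousLinearMap.apply ℝ ((Fin 2 → ℝ) →L[ℝ] ℝ) (e2 b)) ∘ fderiv ℝ (fderiv ℝ F9)))
        = fun y => fderiv ℝ (fderiv ℝ F9) y (e2 b) (e2 g) := rfl
    rw [this] at hc
    rw [hc]
    rfl
  -- step 3 : the middle function is eventually P2
  have h3 : (fun y => fderiv ℝ (fderiv ℝ F9) y (e2 b) (e2 g)) =ᶠ[nhds x]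
      fun y => P2 g b y := by
    filter_upwards [hU] with y hy
    have hyU : ∀ᶠ z in nhds y, z ≠ 0 :=
      (isOpen_compl_singleton : IsOpen ({(0 : Fin 2 → ℝ)}ᶜ)).eventually_mem hy
    have hA1d : DifferentiableAt ℝ (fderiv ℝ F9) y :=
      (hA1cd y hy).differentiableAt (by norm_num)
    -- pull out one evaluation
    have hb : fderiv ℝ (fderiv ℝ F9) y (e2 b) (e2 g)
        = fderiv ℝ (fun z => fderiv ℝ F9 z (e2 g)) y (e2 b) := by
      set ev1 : ((Fin 2 → ℝ) →L[ℝ] ℝ) →L[ℝ] ℝ := ContinuousLinearMap.apply ℝ ℝ (e2 g)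
      have hc := (ev1.hasFDerivAt.comp y hA1d.hasFDerivAt).fderiv
      have : (⇑ev1 ∘ fderiv ℝ F9) = fun z => fderiv ℝ F9 z (e2 g) := rfl
      rw [this] at hc
      rw [hc]
      rfl
    rw [hb]
    have heq : (fun z => fderiv ℝ F9 z (e2 g)) =ᶠ[nhds y] P1 g := by
      filter_upwards [hyU] with z hz
      exact fderiv_F9_apply hz g
    rw [heq.fderiv_eq, (hasF_P1 hy g).fderiv, C1_apply]
  rw [h1, h2, h3.fderiv_eq, (hasF_P2 hx g b).fderiv]

lemma C2_apply (g b a : Fin 2) (x : Fin 2 → ℝ) :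
    C2 g b x (e2 a) =
      (2 * dlt g b) * (-(1 / 8) * ((sq2 x)⁻¹ * (2 * x a))) +
        ((2 * x g) * (-(1 / 8) * ((sq2 x)⁻¹ * (2 * dlt b a) +
            (2 * x b) * ((-(sq2 x ^ 2)⁻¹) * (2 * x a)))) +
          (-(1 / 8) * ((sq2 x)⁻¹ * (2 * x b))) * (2 * dlt g a)) := by
  simp only [C2, ContinuousLinearMap.add_apply, ContinuousLinearMap.smul_apply,
    pr_apply', sD_apply, smul_eq_mul]
  ring

def N2 (a b g : Fin 2) (x : Fin 2 → ℝ) : ℝ :=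
  4 * (x a * x b * x g) - 2 * sq2 x * (dlt a b * x g + dlt b g * x a + dlt a g * x b)

lemma dlt_comm (i j : Fin 2) : dlt i j = dlt j i := by
  simp [dlt, eq_comm]

lemma key3 {x : Fin 2 → ℝ} (hx : x ≠ 0) (a b g : Fin 2) :
    d3 F9 x a b g * (4 * sq2 x ^ 2) = N2 a b g x := by
  have hs : sq2 x ≠ 0 := (sq2_pos hx).ne'
  rw [key hx, C2_apply, N2, dlt_comm g b, dlt_comm b a, dlt_comm g a]
  field_simp
  ring

set_option maxHeartbeats 1000000 in
lemma N2sum (a b g d : Fin 2) (x : Fin 2 → ℝ) :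
    N2 a b 0 x * N2 g d 0 x + N2 a b 1 x * N2 g d 1 x
      = N2 g b 0 x * N2 a d 0 x + N2 g b 1 x * N2 a d 1 x := by
  fin_cases a <;> fin_cases b <;> fin_cases g <;> fin_cases d <;>
    simp only [N2, sq2, dlt, Fin.isValue] <;> norm_num <;> ring

/-- `F(x¹,x²) = −(1/8)((x¹)² + (x²)²) log((x¹)² + (x²)²)` satisfies the
associativity equations with the identity metric `η_{αβ} = δ_{αβ}` on `ℝ² ∖ {0}`. -/
theorem stmt9 :
    ∀ x : Fin 2 → ℝ, x ≠ 0 →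
      ∀ α β γ δ : Fin 2,
        ∑ l, d3 F9 x α β l * d3 F9 x γ δ l
          = ∑ l, d3 F9 x γ β l * d3 F9 x α δ l := by
  intro x hx α β γ δ
  have hs : sq2 x ≠ 0 := (sq2_pos hx).ne'
  have hK : (4 * sq2 x ^ 2) * (4 * sq2 x ^ 2) ≠ 0 := by positivity
  apply mul_right_cancel₀ hK
  have expand : ∀ p q r u K : ℝ,
      (p * q + r * u) * (K * K) = (p * K) * (q * K) + (r * K) * (u * K) := by
    intros; ring
  simp only [Fin.sum_univ_two]
  rw [expand, expand, key3 hx, key3 hx, key3 hx, key3 hx, key3 hx, key3 hx, key3 hx, key3 hx]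
  exact N2sum α β γ δ x


end
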